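/- (Integral identity in the proof of Lemma 4.3.) Let a < c, δ > 0, λ ∈ ℝ with λ ≠ 0. Let g : [a,c] → ℝ be absolutely continuous with integrable derivative g' and |g(x)| ≤ 1/2 - δ for all x ∈ [a,c], and let θ : [a,c] → ℝ be absolutely continuous with θ'(s) = λ(1/2 + g(s) cos 2θ(s)) a.e. Then for every x ∈ [a,c], ∫ₐˣ g(s) sin 2θ(s) ds = (1/(2λ)) · log( (1 + 2g(a) cos 2θ(a)) / (1 + 2g(x) cos 2θ(x)) ) + (1/λ) · ∫ₐˣ g'(s) cos 2θ(s) / (1 + 2g(s) cos 2θ(s)) ds. -/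

import Mathlib

open MeasureTheory Set

set_option maxHeartbeats 2000000

noncomputable section

lemma log_lipschitz0 {δ p q : ℝ} (hδ : 0 < δ) (hp : δ ≤ p) (hq : δ ≤ q) :
    |Real.log p - Real.log q| ≤ |p - q| / δ := by
  wlog h : q ≤ p generalizing p q
  · rw [abs_sub_comm, abs_sub_comm p q]; exact this hq hp (le_of_not_ge h)
  have hq0 : 0 < q := hδ.trans_le hq
  have hp0 : 0 < p := hδ.trans_le hp
  rw [← Real.log_div hp0.ne' hq0.ne',
    abs_of_nonneg (Real.log_nonneg ((one_le_div hq0).2 h)),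
    abs_of_nonneg (sub_nonneg.2 h)]
  have h1 : Real.log (p / q) ≤ p / q - 1 := Real.log_le_sub_one_of_pos (div_pos hp0 hq0)
  have h2 : p / q - 1 = (p - q) / q := by field_simp
  calc Real.log (p/q) ≤ (p - q)/q := by rw [← h2]; exact h1
    _ ≤ (p - q)/δ := by gcongr

private lemma alg_comb (A B u v w0 : ℝ) (h : w0 ≠ 0) :
    A*(2*u/w0) + 2*B*v/w0 = (2*A*u + 2*B*v)/w0 := by field_simp

private lemma alg_inv_diff (w0 w1 : ℝ) (h0 : w0 ≠ 0) (h1 : w1 ≠ 0) :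
    1/w1 - 1/w0 = (w0 - w1)/(w1*w0) := by field_simp

private lemma alg_decomp (A B At Bt u v w0 w1 : ℝ) (h0 : w0 ≠ 0) (h1 : w1 ≠ 0) :
    (2*At*u + 2*Bt*v)/w1 - (2*A*u + 2*B*v)/w0
      = (2*(At - A)*u + 2*(Bt - B)*v)/w1 + (2*A*u + 2*B*v)*(1/w1 - 1/w0) := by
  field_simp; ring

lemma key_log_identity (a x δ : ℝ) (hax : a ≤ x) (hδ : 0 < δ)
    (f G U V : ℝ → ℝ)
    (hfint : IntegrableOn f (Icc a x))
    (hG : ∀ s ∈ Icc a x, G s = G a + ∫ t in a..s, f t)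
    (hGbd : ∀ s ∈ Icc a x, |G s| ≤ 1/2)
    (hUc : ContinuousOn U (Icc a x))
    (hVc : ContinuousOn V (Icc a x))
    (hUbd : ∀ s ∈ Icc a x, |U s| ≤ 1)
    (hUd : ∀ s ∈ Ioo a x, HasDerivAt U (V s) s)
    (hw : ∀ s ∈ Icc a x, 2*δ ≤ 1 + 2 * G s * U s) :
    Real.log (1 + 2 * G x * U x) - Real.log (1 + 2 * G a * U a)
      = ∫ s in a..x, (2 * f s * U s + 2 * G s * V s) / (1 + 2 * G s * U s) := by
  have haI : a ∈ Icc a x := ⟨le_rfl, hax⟩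
  have hxI : x ∈ Icc a x := ⟨hax, le_rfl⟩
  set w : ℝ → ℝ := fun s => 1 + 2 * G s * U s with hwdef
  have hwpos : ∀ s ∈ Icc a x, 0 < w s := fun s hs => lt_of_lt_of_le (by linarith) (hw s hs)
  have hwne : ∀ s ∈ Icc a x, w s ≠ 0 := fun s hs => (hwpos s hs).ne'
  -- continuity of G
  have hGc : ContinuousOn G (Icc a x) := by
    have h1 : ContinuousOn (fun s => ∫ t in a..s, f t) (Icc a x) := by
      have := intervalIntegral.continuousOn_primitive_interval
        (a := a) (b := x) (f := f) (μ := volume) (by rwa [uIcc_of_le hax])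
      rwa [uIcc_of_le hax] at this
    exact (continuousOn_const.add h1).congr fun s hs => hG s hs
  have hwc : ContinuousOn w (Icc a x) :=
    continuousOn_const.add ((continuousOn_const.mul hGc).mul hUc)
  set p : ℝ → ℝ := fun s => (2 * f s * U s + 2 * G s * V s) / (w s) with hpdef
  -- bound on V
  obtain ⟨M, hM⟩ := isCompact_Icc.exists_bound_of_continuousOn hVc
  have hM0 : 0 ≤ M := le_trans (norm_nonneg _) (hM a haI)
  set Nf : ℝ := ∫ s in Icc a x, |f s| with hNfdef
  have hNf0 : 0 ≤ Nf := integral_nonneg fun s => abs_nonneg _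
  set C : ℝ := 6/δ + 2*Nf/δ^2 + (x-a)*(2*M*(1/δ + 1/(2*δ^2))) with hCdef
  have hC0 : 0 < C := by
    rw [hCdef]
    have h1 : 0 < 6/δ := by positivity
    have h2 : 0 ≤ 2*Nf/δ^2 := by positivity
    have h3 : 0 ≤ (x-a)*(2*M*(1/δ + 1/(2*δ^2))) := by
      apply mul_nonneg (by linarith) (by positivity)
    linarith
  -- integrability of p
  have hpint : IntegrableOn p (Icc a x) := by
    have h1 : IntegrableOn (fun s => f s * (2 * U s / w s)) (Icc a x) :=
      hfint.mul_continuousOn ((continuousOn_const.mul hUc).div hwc hwne) isCompact_Icc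
    have h2 : IntegrableOn (fun s => 2 * G s * V s / w s) (Icc a x) :=
      ((((continuousOn_const.mul hGc).mul hVc).div hwc hwne)).integrableOn_compact isCompact_Icc
    have h3 := h1.add h2
    refine MeasureTheory.IntegrableOn.congr_fun h3 (fun s hs => ?_) measurableSet_Icc
    simp only [Pi.add_apply, hpdef]
    exact alg_comb _ _ _ _ _ (hwne s hs)
  have hII : ∀ {h : ℝ → ℝ}, IntegrableOn h (Icc a x) → IntervalIntegrable h volume a x :=
    fun hh => (intervalIntegrable_iff_integrableOn_Icc_of_le hax).2 hh
  have key : ∀ ε : ℝ, 0 < ε → ε ≤ δ/2 →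
      |(Real.log (w x) - Real.log (w a)) - ∫ s in a..x, p s| ≤ C * ε := by
    intro ε hε hεδ
    -- continuous approximation of f in L¹
    have hf1 : Integrable ((Icc a x).indicator f) volume :=
      (integrable_indicator_iff measurableSet_Icc).2 hfint
    obtain ⟨ft, -, hft1, hftc, hfti⟩ := hf1.exists_hasCompactSupport_integral_sub_le hε
    have hftIcc : IntegrableOn ft (Icc a x) := hfti.integrableOn
    have hdiffint : IntegrableOn (fun t => |ft t - f t|) (Icc a x) := (hftIcc.sub hfint).abs
    have hdiff : ∫ t in Icc a x, |ft t - f t| ≤ ε := by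
      have h1 : ∀ t ∈ Icc a x, |ft t - f t| = ‖(Icc a x).indicator f t - ft t‖ := by
        intro t ht
        rw [Set.indicator_of_mem ht, Real.norm_eq_abs, abs_sub_comm]
      calc ∫ t in Icc a x, |ft t - f t|
          = ∫ t in Icc a x, ‖(Icc a x).indicator f t - ft t‖ :=
            setIntegral_congr_fun measurableSet_Icc h1
        _ ≤ ∫ t, ‖(Icc a x).indicator f t - ft t‖ :=
            setIntegral_le_integral (hf1.sub hfti).norm (.of_forall fun t => norm_nonneg _)
        _ ≤ ε := hft1
    -- approximate primitive
    set Gt : ℝ → ℝ := fun s => G a + ∫ t in a..s, ft t with hGtdef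
    have hGtd : ∀ s : ℝ, HasDerivAt Gt (ft s) s := fun s =>
      (intervalIntegral.integral_hasDerivAt_right (hftc.intervalIntegrable a s)
        (hftc.stronglyMeasurableAtFilter volume (nhds s)) hftc.continuousAt).const_add (G a)
    have hGtc : Continuous Gt := by
      rw [continuous_iff_continuousAt]; exact fun s => (hGtd s).continuousAt
    have hGtG : ∀ s ∈ Icc a x, |Gt s - G s| ≤ ε := by
      intro s hs
      have hfs : IntervalIntegrable f volume a s :=
        (intervalIntegrable_iff_integrableOn_Icc_of_le hs.1).2
          (hfint.mono_set (Icc_subset_Icc_right hs.2))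
      have h1 : Gt s - G s = ∫ t in a..s, (ft t - f t) := by
        rw [hG s hs, hGtdef]
        simp only
        rw [intervalIntegral.integral_sub (hftc.intervalIntegrable a s) hfs]
        ring
      rw [h1]
      calc |∫ t in a..s, (ft t - f t)| ≤ ∫ t in a..s, |ft t - f t| :=
            intervalIntegral.abs_integral_le_integral_abs hs.1
        _ = ∫ t in Ioc a s, |ft t - f t| := intervalIntegral.integral_of_le hs.1
        _ ≤ ∫ t in Icc a x, |ft t - f t| := by
            apply setIntegral_mono_set hdiffint (.of_forall fun t => abs_nonneg _)
            exact ((Ioc_subset_Icc_self).trans (Icc_subset_Icc_right hs.2)).eventuallyLE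
        _ ≤ ε := hdiff
    set wt : ℝ → ℝ := fun s => 1 + 2 * Gt s * U s with hwtdef
    have hGU : ∀ s ∈ Icc a x, |(G s - Gt s) * U s| ≤ ε := by
      intro s hs
      rw [abs_mul, abs_sub_comm]
      calc |Gt s - G s| * |U s| ≤ ε * 1 :=
            mul_le_mul (hGtG s hs) (hUbd s hs) (abs_nonneg _) hε.le
        _ = ε := mul_one ε
    have hwwt : ∀ s ∈ Icc a x, |w s - wt s| ≤ 2 * ε := by
      intro s hs
      have h2 : w s - wt s = 2 * ((G s - Gt s) * U s) := by rw [hwdef, hwtdef]; ring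
      rw [h2, abs_mul, abs_two]
      linarith [hGU s hs]
    have hwtδ : ∀ s ∈ Icc a x, δ ≤ wt s := by
      intro s hs
      have h2 : 2*δ ≤ w s := hw s hs
      have h4 := (abs_le.1 (hwwt s hs)).2
      linarith
    have hwtpos : ∀ s ∈ Icc a x, 0 < wt s := fun s hs => hδ.trans_le (hwtδ s hs)
    have hwtne : ∀ s ∈ Icc a x, wt s ≠ 0 := fun s hs => (hwtpos s hs).ne'
    set q : ℝ → ℝ := fun s => (2 * ft s * U s + 2 * Gt s * V s) / wt s with hqdef
    have hwtcOn : ContinuousOn wt (Icc a x) :=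
      continuousOn_const.add ((continuousOn_const.mul hGtc.continuousOn).mul hUc)
    have hqc : ContinuousOn q (Icc a x) :=
      (((continuousOn_const.mul hftc.continuousOn).mul hUc).add
        ((continuousOn_const.mul hGtc.continuousOn).mul hVc)).div hwtcOn hwtne
    have hqint : IntegrableOn q (Icc a x) := hqc.integrableOn_compact isCompact_Icc
    -- FTC for the approximation
    have hFTC : ∫ s in a..x, q s = Real.log (wt x) - Real.log (wt a) := by
      apply intervalIntegral.integral_eq_sub_of_hasDeriv_right_of_le hax
      · exact hwtcOn.log hwtne
      · intro s hs
        have hsI : s ∈ Icc a x := Ioo_subset_Icc_self hs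
        have h1 : HasDerivAt (fun y => 1 + 2 * (Gt y * U y)) (2 * (ft s * U s + Gt s * V s)) s :=
          (((hGtd s).mul (hUd s hs)).const_mul 2).const_add 1
        have h2 : (fun y => 1 + 2 * (Gt y * U y)) = wt := by
          funext y; rw [hwtdef]; ring
        rw [h2] at h1
        have hD : HasDerivAt wt (2 * ft s * U s + 2 * Gt s * V s) s := by
          convert h1 using 1; ring
        have h3 := hD.log (hwtne s hsI)
        have h4 : HasDerivAt (fun y => Real.log (wt y)) (q s) s := h3
        exact h4.hasDerivWithinAt
      · apply ContinuousOn.intervalIntegrable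
        rwa [uIcc_of_le hax]
    -- pointwise bound between integrands
    have hbound : ∀ s ∈ Icc a x, |q s - p s| ≤
        (2/δ) * |ft s - f s| + (2*ε/δ^2) * |f s| + 2*M*(1/δ + 1/(2*δ^2))*ε := by
      intro s hs
      have hw0 : 2*δ ≤ w s := hw s hs
      have hw1 : δ ≤ wt s := hwtδ s hs
      have hw0' : 0 < w s := hwpos s hs
      have hw1' : 0 < wt s := hwtpos s hs
      have hBd : |Gt s - G s| ≤ ε := hGtG s hs
      have hU1 : |U s| ≤ 1 := hUbd s hs
      have hV1 : |V s| ≤ M := by have := hM s hs; rwa [Real.norm_eq_abs] at this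
      have hGb : |G s| ≤ 1/2 := hGbd s hs
      have hinv : |1/wt s - 1/w s| ≤ ε/δ^2 := by
        have h1 : 1/wt s - 1/w s = (w s - wt s)/(wt s * w s) :=
          alg_inv_diff _ _ (hwne s hs) (hwtne s hs)
        have h4 : 2*δ^2 ≤ |wt s * w s| := by
          rw [abs_of_pos (mul_pos hw1' hw0')]
          calc 2*δ^2 = δ * (2*δ) := by ring
            _ ≤ wt s * w s := mul_le_mul hw1 hw0 (by positivity) hw1'.le
        rw [h1, abs_div]
        calc |w s - wt s| / |wt s * w s| ≤ (2*ε) / (2*δ^2) :=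
              div_le_div₀ (by positivity) (hwwt s hs) (by positivity) h4
          _ = ε/δ^2 := by
              rw [div_eq_div_iff (by positivity) (by positivity)]; ring
      have hqp : q s - p s = (2*(ft s - f s)*U s + 2*(Gt s - G s)*V s)/wt s
          + (2*f s*U s + 2*G s*V s)*(1/wt s - 1/w s) := by
        simp only [hpdef, hqdef]
        exact alg_decomp _ _ _ _ _ _ _ _ (hwne s hs) (hwtne s hs)
      have t1 : |(2*(ft s - f s)*U s + 2*(Gt s - G s)*V s)/wt s|
          ≤ (2*|ft s - f s| + 2*ε*M)/δ := by
        rw [abs_div]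
        apply div_le_div₀ (by positivity) ?_ hδ (le_trans hw1 (le_abs_self _))
        calc |2*(ft s - f s)*U s + 2*(Gt s - G s)*V s|
            ≤ |2*(ft s - f s)*U s| + |2*(Gt s - G s)*V s| := abs_add_le _ _
          _ ≤ 2*|ft s - f s| + 2*ε*M := by
              simp only [abs_mul, abs_two]
              have m1 : |ft s - f s| * |U s| ≤ |ft s - f s| * 1 :=
                mul_le_mul_of_nonneg_left hU1 (abs_nonneg _)
              have m2 : |Gt s - G s| * |V s| ≤ ε * M :=
                mul_le_mul hBd hV1 (abs_nonneg _) hε.le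
              nlinarith [abs_nonneg (ft s - f s), abs_nonneg (Gt s - G s)]
      have t2 : |(2*f s*U s + 2*G s*V s)*(1/wt s - 1/w s)| ≤ (2*|f s| + M)*(ε/δ^2) := by
        rw [abs_mul]
        apply mul_le_mul ?_ hinv (abs_nonneg _) (by positivity)
        calc |2*f s*U s + 2*G s*V s| ≤ |2*f s*U s| + |2*G s*V s| := abs_add_le _ _
          _ ≤ 2*|f s| + M := by
              simp only [abs_mul, abs_two]
              have m1 : |f s| * |U s| ≤ |f s| * 1 :=
                mul_le_mul_of_nonneg_left hU1 (abs_nonneg _)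
              have m2 : |G s| * |V s| ≤ (1/2) * M :=
                mul_le_mul hGb hV1 (abs_nonneg _) (by norm_num)
              nlinarith [abs_nonneg (f s)]
      calc |q s - p s| = |(2*(ft s - f s)*U s + 2*(Gt s - G s)*V s)/wt s
            + (2*f s*U s + 2*G s*V s)*(1/wt s - 1/w s)| := by rw [hqp]
        _ ≤ |(2*(ft s - f s)*U s + 2*(Gt s - G s)*V s)/wt s|
            + |(2*f s*U s + 2*G s*V s)*(1/wt s - 1/w s)| := abs_add_le _ _
        _ ≤ (2*|ft s - f s| + 2*ε*M)/δ + (2*|f s| + M)*(ε/δ^2) := add_le_add t1 t2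
        _ = (2/δ) * |ft s - f s| + (2*ε/δ^2) * |f s| + 2*M*(1/δ + 1/(2*δ^2))*ε := by
            field_simp
            ring
    -- integral estimate
    have iA : IntervalIntegrable (fun s => (2/δ)*|ft s - f s|) volume a x :=
      hII (hdiffint.const_mul _)
    have iB : IntervalIntegrable (fun s => (2*ε/δ^2)*|f s|) volume a x :=
      hII (hfint.abs.const_mul _)
    have iC : IntervalIntegrable (fun _ : ℝ => 2*M*(1/δ+1/(2*δ^2))*ε) volume a x :=
      intervalIntegrable_const
    have hI1 : ∫ s in a..x, |ft s - f s| ≤ ε := by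
      rw [intervalIntegral.integral_of_le hax]
      exact le_trans (setIntegral_mono_set hdiffint (.of_forall fun t => abs_nonneg _)
        Ioc_subset_Icc_self.eventuallyLE) hdiff
    have hI2 : ∫ s in a..x, |f s| ≤ Nf := by
      rw [intervalIntegral.integral_of_le hax, hNfdef]
      exact setIntegral_mono_set hfint.abs (.of_forall fun t => abs_nonneg _)
        Ioc_subset_Icc_self.eventuallyLE
    have hIest : |(∫ s in a..x, q s) - ∫ s in a..x, p s|
        ≤ (2/δ)*ε + (2*ε/δ^2)*Nf + (x-a)*(2*M*(1/δ+1/(2*δ^2))*ε) := by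
      have e1 : (∫ s in a..x, q s) - ∫ s in a..x, p s = ∫ s in a..x, (q s - p s) :=
        (intervalIntegral.integral_sub (hII hqint) (hII hpint)).symm
      rw [e1]
      calc |∫ s in a..x, (q s - p s)| ≤ ∫ s in a..x, |q s - p s| :=
            intervalIntegral.abs_integral_le_integral_abs hax
        _ ≤ ∫ s in a..x, ((2/δ)*|ft s - f s| + (2*ε/δ^2)*|f s| + 2*M*(1/δ+1/(2*δ^2))*ε) :=
            intervalIntegral.integral_mono_on hax (hII ((hqint.sub hpint).abs))
              ((iA.add iB).add iC) hbound
        _ = (2/δ)*(∫ s in a..x, |ft s - f s|) + (2*ε/δ^2)*(∫ s in a..x, |f s|)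
            + (x-a)*(2*M*(1/δ+1/(2*δ^2))*ε) := by
            rw [intervalIntegral.integral_add (iA.add iB) iC,
              intervalIntegral.integral_add iA iB,
              intervalIntegral.integral_const_mul, intervalIntegral.integral_const_mul,
              intervalIntegral.integral_const, smul_eq_mul]
        _ ≤ (2/δ)*ε + (2*ε/δ^2)*Nf + (x-a)*(2*M*(1/δ+1/(2*δ^2))*ε) := by
            have n1 : (0:ℝ) ≤ 2/δ := by positivity
            have n2 : (0:ℝ) ≤ 2*ε/δ^2 := by positivity
            exact add_le_add (add_le_add (mul_le_mul_of_nonneg_left hI1 n1)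
              (mul_le_mul_of_nonneg_left hI2 n2)) le_rfl
    -- log estimates
    have hlog : ∀ s ∈ Icc a x, |Real.log (w s) - Real.log (wt s)| ≤ 2*ε/δ := by
      intro s hs
      calc |Real.log (w s) - Real.log (wt s)| ≤ |w s - wt s|/δ :=
            log_lipschitz0 hδ (le_trans (by linarith) (hw s hs)) (hwtδ s hs)
        _ ≤ (2*ε)/δ := by gcongr; exact hwwt s hs
        _ = 2*ε/δ := by ring
    -- assemble
    have hdecomp : (Real.log (w x) - Real.log (w a)) - ∫ s in a..x, p s
        = ((Real.log (w x) - Real.log (wt x)) - (Real.log (w a) - Real.log (wt a)))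
          + ((∫ s in a..x, q s) - ∫ s in a..x, p s) := by
      rw [hFTC]; ring
    rw [hdecomp]
    have habs2 := abs_le.1 (hlog x hxI)
    have habs3 := abs_le.1 (hlog a haI)
    calc |((Real.log (w x) - Real.log (wt x)) - (Real.log (w a) - Real.log (wt a)))
          + ((∫ s in a..x, q s) - ∫ s in a..x, p s)|
        ≤ |(Real.log (w x) - Real.log (wt x)) - (Real.log (w a) - Real.log (wt a))|
          + |(∫ s in a..x, q s) - ∫ s in a..x, p s| := abs_add_le _ _
      _ ≤ (|Real.log (w x) - Real.log (wt x)| + |Real.log (w a) - Real.log (wt a)|)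
          + |(∫ s in a..x, q s) - ∫ s in a..x, p s| := by
          exact add_le_add (abs_sub _ _) le_rfl
      _ ≤ (2*ε/δ + 2*ε/δ) + ((2/δ)*ε + (2*ε/δ^2)*Nf + (x-a)*(2*M*(1/δ+1/(2*δ^2))*ε)) :=
          add_le_add (add_le_add (hlog x hxI) (hlog a haI)) hIest
      _ = C * ε := by rw [hCdef]; field_simp; ring
  -- conclude from the arbitrary-ε estimate
  by_contra hne
  have hne' : Real.log (w x) - Real.log (w a) ≠ ∫ s in a..x, p s := hne
  set Δ : ℝ := (Real.log (w x) - Real.log (w a)) - ∫ s in a..x, p s with hΔdef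
  have hΔ : Δ ≠ 0 := sub_ne_zero.2 hne'
  have hΔ0 : 0 < |Δ| := abs_pos.2 hΔ
  have hε0 : 0 < min (δ/2) (|Δ|/(2*C)) := lt_min (by linarith) (by positivity)
  have hkey := key _ hε0 (min_le_left _ _)
  have h2 : C * min (δ/2) (|Δ|/(2*C)) ≤ C * (|Δ|/(2*C)) :=
    mul_le_mul_of_nonneg_left (min_le_right _ _) hC0.le
  have h3 : C * (|Δ|/(2*C)) = |Δ|/2 := by
    field_simp
  have : |Δ| ≤ |Δ|/2 := by
    calc |Δ| ≤ C * min (δ/2) (|Δ|/(2*C)) := hkey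
      _ ≤ |Δ|/2 := by rw [← h3]; exact h2
  linarith



/-- integral identity in the proof of Lemma 4.3. For an absolutely
continuous `g` with `|g| ≤ 1/2 - δ` and a Prüfer angle `θ` with
`θ' = λ(1/2 + g cos 2θ)` a.e., for every `x ∈ [a,c]`,
`∫ₐˣ g sin 2θ = (1/(2λ)) log((1 + 2g(a)cos 2θ(a))/(1 + 2g(x)cos 2θ(x)))
  + (1/λ) ∫ₐˣ g' cos 2θ / (1 + 2g cos 2θ)`. -/
theorem pruefer_integral_identity
    (a c δ lam : ℝ) (hac : a < c) (hδ : 0 < δ) (hlam : lam ≠ 0)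
    (g gd : ℝ → ℝ)
    (hgdint : IntegrableOn gd (Icc a c))
    (hg : ∀ x ∈ Icc a c, g x = g a + ∫ s in a..x, gd s)
    (hgbd : ∀ x ∈ Icc a c, |g x| ≤ 1/2 - δ)
    (θ : ℝ → ℝ) (hθc : ContinuousOn θ (Icc a c))
    (hθ : ∀ x ∈ Icc a c,
      θ x = θ a + ∫ s in a..x, lam * (1/2 + g s * Real.cos (2 * θ s))) :
    ∀ x ∈ Icc a c,
      ∫ s in a..x, g s * Real.sin (2 * θ s)
        = (1 / (2 * lam)) *
            Real.log ((1 + 2 * g a * Real.cos (2 * θ a)) /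
              (1 + 2 * g x * Real.cos (2 * θ x)))
          + (1 / lam) *
              ∫ s in a..x, gd s * Real.cos (2 * θ s) /
                (1 + 2 * g s * Real.cos (2 * θ s)) := by
  intro x hx
  obtain ⟨hax, hxc⟩ := hx
  -- continuity of g
  have hgc : ContinuousOn g (Icc a c) := by
    have h1 : ContinuousOn (fun s => ∫ t in a..s, gd t) (Icc a c) := by
      have := intervalIntegral.continuousOn_primitive_interval
        (a := a) (b := c) (f := gd) (μ := volume) (by rwa [uIcc_of_le hac.le])
      rwa [uIcc_of_le hac.le] at this
    exact (continuousOn_const.add h1).congr fun s hs => hg s hs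
  -- the Prüfer angle derivative
  have hcos2θ : ContinuousOn (fun s => Real.cos (2 * θ s)) (Icc a c) :=
    Real.continuous_cos.comp_continuousOn (continuousOn_const.mul hθc)
  have hsin2θ : ContinuousOn (fun s => Real.sin (2 * θ s)) (Icc a c) :=
    Real.continuous_sin.comp_continuousOn (continuousOn_const.mul hθc)
  have hhc : ContinuousOn (fun s => lam * (1/2 + g s * Real.cos (2 * θ s))) (Icc a c) :=
    continuousOn_const.mul (continuousOn_const.add (hgc.mul hcos2θ))
  have hθd : ∀ s ∈ Ioo a c, HasDerivAt θ (lam * (1/2 + g s * Real.cos (2 * θ s))) s := by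
    intro s hs
    have hmem : Icc a c ∈ nhds s := Icc_mem_nhds hs.1 hs.2
    have hprim : HasDerivAt (fun y => θ a + ∫ t in a..y, lam * (1/2 + g t * Real.cos (2 * θ t)))
        (lam * (1/2 + g s * Real.cos (2 * θ s))) s := by
      refine (intervalIntegral.integral_hasDerivAt_right ?_ ?_ ?_).const_add (θ a)
      · apply ContinuousOn.intervalIntegrable
        apply hhc.mono
        rw [uIcc_of_le (Ioo_subset_Icc_self hs).1]
        exact Icc_subset_Icc_right (Ioo_subset_Icc_self hs).2
      · exact (hhc.mono Ioo_subset_Icc_self).stronglyMeasurableAtFilter isOpen_Ioo s hs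
      · exact (hhc s (Ioo_subset_Icc_self hs)).continuousAt hmem
    apply hprim.congr_of_eventuallyEq
    filter_upwards [hmem] with y hy
    exact hθ y hy
  -- setup for key lemma
  set U : ℝ → ℝ := fun s => Real.cos (2 * θ s) with hUdef
  set V : ℝ → ℝ := fun s => -(lam * Real.sin (2 * θ s) * (1 + 2 * g s * Real.cos (2 * θ s)))
    with hVdef
  have hUd : ∀ s ∈ Ioo a x, HasDerivAt U (V s) s := by
    intro s hs
    have hs' : s ∈ Ioo a c := ⟨hs.1, lt_of_lt_of_le hs.2 hxc⟩
    have h2θ : HasDerivAt (fun y => 2 * θ y) (2 * (lam * (1/2 + g s * Real.cos (2 * θ s)))) s :=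
      (hθd s hs').const_mul 2
    have hcomp := (Real.hasDerivAt_cos (2 * θ s)).comp s h2θ
    have : HasDerivAt U (-Real.sin (2 * θ s) * (2 * (lam * (1/2 + g s * Real.cos (2 * θ s))))) s :=
      hcomp
    convert this using 1
    rw [hVdef]
    ring
  have hIxc : Icc a x ⊆ Icc a c := Icc_subset_Icc_right hxc
  have hIoxc : Ioo a x ⊆ Ioo a c := Ioo_subset_Ioo_right hxc
  have hgbd' : ∀ s ∈ Icc a x, |g s| ≤ 1/2 := fun s hs => by
    have := hgbd s (hIxc hs); linarith
  have hw2δ : ∀ s ∈ Icc a x, 2*δ ≤ 1 + 2 * g s * U s := by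
    intro s hs
    have h1 : |g s| ≤ 1/2 - δ := hgbd s (hIxc hs)
    have h2 : |U s| ≤ 1 := Real.abs_cos_le_one _
    have h3 : |g s * U s| ≤ 1/2 - δ := by
      rw [abs_mul]
      calc |g s| * |U s| ≤ (1/2 - δ) * 1 :=
        mul_le_mul h1 h2 (abs_nonneg _) (le_trans (abs_nonneg _) h1)
        _ = 1/2 - δ := mul_one _
    have h4 := (abs_le.1 h3).1
    linarith
  have hkey := key_log_identity a x δ hax hδ gd g U V
    (hgdint.mono_set hIxc)
    (fun s hs => hg s (hIxc hs))
    hgbd'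
    (hcos2θ.mono hIxc)
    ((((continuousOn_const.mul hsin2θ).mul
      (continuousOn_const.add ((continuousOn_const.mul hgc).mul hcos2θ))).neg).mono hIxc)
    (fun s _ => Real.abs_cos_le_one _)
    hUd
    hw2δ
  -- rewrite the integrand
  have haI : a ∈ Icc a x := ⟨le_rfl, hax⟩
  have hxI : x ∈ Icc a x := ⟨hax, le_rfl⟩
  have hwne : ∀ s ∈ Icc a x, (1 + 2 * g s * Real.cos (2 * θ s)) ≠ 0 := by
    intro s hs
    have h := hw2δ s hs
    simp only [hUdef] at h
    exact (lt_of_lt_of_le (by linarith) h).ne'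
  have hEq : EqOn (fun s => (2 * gd s * U s + 2 * g s * V s) / (1 + 2 * g s * U s))
      (fun s => 2 * (gd s * Real.cos (2 * θ s) / (1 + 2 * g s * Real.cos (2 * θ s)))
        + (-(2 * lam)) * (g s * Real.sin (2 * θ s))) (uIcc a x) := by
    rw [uIcc_of_le hax]
    intro s hs
    simp only [hUdef, hVdef]
    have hws := hwne s hs
    rw [mul_div_assoc', div_add' _ _ _ hws, div_left_inj' hws]
    ring
  rw [intervalIntegral.integral_congr hEq] at hkey
  -- split the integral
  have hφc : ContinuousOn
      (fun s => Real.cos (2 * θ s) / (1 + 2 * g s * Real.cos (2 * θ s))) (Icc a x) :=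
    (hcos2θ.mono hIxc).div
      ((continuousOn_const.add ((continuousOn_const.mul hgc).mul hcos2θ)).mono hIxc) hwne
  have hAint : IntegrableOn
      (fun s => gd s * Real.cos (2 * θ s) / (1 + 2 * g s * Real.cos (2 * θ s))) (Icc a x) :=
    ((hgdint.mono_set hIxc).mul_continuousOn hφc isCompact_Icc).congr_fun
      (fun s _ => (mul_div_assoc _ _ _).symm) measurableSet_Icc
  have hA : IntervalIntegrable
      (fun s => gd s * Real.cos (2 * θ s) / (1 + 2 * g s * Real.cos (2 * θ s))) volume a x :=
    (intervalIntegrable_iff_integrableOn_Icc_of_le hax).2 hAint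
  have hB : IntervalIntegrable (fun s => g s * Real.sin (2 * θ s)) volume a x := by
    apply ContinuousOn.intervalIntegrable
    rw [uIcc_of_le hax]
    exact (hgc.mul hsin2θ).mono hIxc
  rw [intervalIntegral.integral_add (hA.const_mul 2) (hB.const_mul (-(2*lam))),
    intervalIntegral.integral_const_mul, intervalIntegral.integral_const_mul] at hkey
  simp only [hUdef] at hkey
  -- final algebra
  have hNx : (0:ℝ) < 1 + 2 * g x * Real.cos (2 * θ x) := by
    have h := hw2δ x hxI; simp only [hUdef] at h; linarith
  have hNa : (0:ℝ) < 1 + 2 * g a * Real.cos (2 * θ a) := by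
    have h := hw2δ a haI; simp only [hUdef] at h; linarith
  rw [Real.log_div hNa.ne' hNx.ne']
  have h2 : (∫ s in a..x, g s * Real.sin (2 * θ s)) = (2 * (∫ s in a..x, gd s * Real.cos (2 * θ s) /
      (1 + 2 * g s * Real.cos (2 * θ s))) - (Real.log (1 + 2 * g x * Real.cos (2 * θ x))
      - Real.log (1 + 2 * g a * Real.cos (2 * θ a)))) / (2 * lam) := by
    rw [eq_div_iff (mul_ne_zero two_ne_zero hlam)]
    linear_combination hkey
  rw [h2]
  ring
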